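/- For B ∈ Λ²V*, the wedge action φ ↦ exp(B) ∧ φ preserves the spinor bilinear form: ⟨exp(B)∧φ, exp(B)∧ψ⟩ = ⟨φ, ψ⟩ for all φ, ψ ∈ Λᵉᵛ V* (similarly for odd forms). -/

import Mathlib

set_option synthInstance.maxHeartbeats 1000000
set_option maxHeartbeats 1000000

/-!
STATEMENT 10: For `B ∈ Λ²V*`, the wedge action `φ ↦ exp(B) ∧ φ` preserves the spinor
bilinear form: `⟨exp(B)∧φ, exp(B)∧ψ⟩ = ⟨φ, ψ⟩` for all `φ, ψ`.
(Here `W` plays the role of `V*`.)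
-/

open ExteriorAlgebra DirectSum

variable {W : Type*} [AddCommGroup W] [Module ℝ W]

/-- The involution `σ(φ₂ₘ) = (-1)ᵐ φ₂ₘ`, `σ(φ₂ₘ₊₁) = (-1)ᵐ φ₂ₘ₊₁`. -/
noncomputable def sigmaForm (x : ExteriorAlgebra ℝ W) : ExteriorAlgebra ℝ W :=
  DirectSum.toAddMonoid
    (fun k : ℕ => (((-1 : ℝ) ^ (k / 2) • (⋀[ℝ]^k W).subtype).toAddMonoidHom))
    (DirectSum.decompose (fun i : ℕ => ⋀[ℝ]^i W) x)

/-- Projection onto the degree-`n` graded component of the exterior algebra. -/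
noncomputable def gradePiece (n : ℕ) (x : ExteriorAlgebra ℝ W) : ExteriorAlgebra ℝ W :=
  (DirectSum.decompose (fun i : ℕ => ⋀[ℝ]^i W) x n : ExteriorAlgebra ℝ W)

/-- The spinor pairing `⟨φ,ψ⟩ = (σφ ∧ ψ)ₙ`. -/
noncomputable def spinorPairing (n : ℕ) (φ ψ : ExteriorAlgebra ℝ W) :
    ExteriorAlgebra ℝ W :=
  gradePiece n (sigmaForm φ * ψ)

/-- The exponential `exp B = Σ Bᵏ/k!` (a finite sum). -/
noncomputable def expWedge [FiniteDimensional ℝ W] (B : ExteriorAlgebra ℝ W) :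
    ExteriorAlgebra ℝ W :=
  ∑ k ∈ Finset.range (Module.finrank ℝ W + 1), (k.factorial : ℝ)⁻¹ • B ^ k

/-! ### Auxiliary lemmas -/

lemma sigmaForm_zero : sigmaForm (0 : ExteriorAlgebra ℝ W) = 0 := by
  unfold sigmaForm
  rw [DirectSum.decompose_zero, map_zero]

lemma sigmaForm_add (x y : ExteriorAlgebra ℝ W) :
    sigmaForm (x + y) = sigmaForm x + sigmaForm y := by
  unfold sigmaForm
  rw [DirectSum.decompose_add, map_add]

lemma sigmaForm_sum {ι : Type*} (s : Finset ι) (f : ι → ExteriorAlgebra ℝ W) :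
    sigmaForm (∑ i ∈ s, f i) = ∑ i ∈ s, sigmaForm (f i) := by
  classical
  induction s using Finset.induction with
  | empty => simp [sigmaForm_zero]
  | insert _ _ h ih =>
    rw [Finset.sum_insert h, Finset.sum_insert h, sigmaForm_add, ih]

lemma sigmaForm_of_mem {k : ℕ} {x : ExteriorAlgebra ℝ W} (hx : x ∈ ⋀[ℝ]^k W) :
    sigmaForm x = ((-1 : ℝ) ^ (k / 2)) • x := by
  unfold sigmaForm
  have : x = ((⟨x, hx⟩ : ⋀[ℝ]^k W) : ExteriorAlgebra ℝ W) := rfl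
  rw [this, DirectSum.decompose_coe, DirectSum.toAddMonoid_of]
  rfl

lemma sigmaForm_mul {j : ℕ} {x : ExteriorAlgebra ℝ W} (hx : x ∈ ⋀[ℝ]^(2 * j) W)
    (y : ExteriorAlgebra ℝ W) :
    sigmaForm (x * y) = (((-1 : ℝ) ^ j) • x) * sigmaForm y := by
  induction y using DirectSum.Decomposition.inductionOn (ℳ := fun i : ℕ => ⋀[ℝ]^i W) with
  | zero => simp [sigmaForm_zero]
  | homogeneous m =>
    rename_i i
    have hxm : x * (m : ExteriorAlgebra ℝ W) ∈ ⋀[ℝ]^(2 * j + i) W :=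
      SetLike.mul_mem_graded hx m.2
    rw [sigmaForm_of_mem hxm, sigmaForm_of_mem m.2]
    have hdiv : (2 * j + i) / 2 = j + i / 2 := by
      rw [Nat.mul_add_div (by norm_num)]
    rw [hdiv, pow_add, smul_mul_smul_comm, mul_smul]
  | add a b ha hb =>
    rw [mul_add, sigmaForm_add, ha, hb, sigmaForm_add, mul_add]

lemma commute_of_mem_two {B : ExteriorAlgebra ℝ W} (hB : B ∈ ⋀[ℝ]^2 W)
    (y : ExteriorAlgebra ℝ W) : Commute B y := by
  rw [show ⋀[ℝ]^2 W = LinearMap.range (ι ℝ : W →ₗ[ℝ] _) * LinearMap.range (ι ℝ) from pow_two _]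
    at hB
  refine Submodule.mul_induction_on hB ?_ ?_
  · rintro _ ⟨a, rfl⟩ _ ⟨b, rfl⟩
    induction y using CliffordAlgebra.induction with
    | algebraMap r => exact (Algebra.commute_algebraMap_right r _)
    | ι m =>
      have hswap : ∀ u v : W, ι ℝ u * ι ℝ v = -(ι ℝ v * ι ℝ u) := fun u v =>
        eq_neg_of_add_eq_zero_left (ι_add_mul_swap u v)
      show (ι ℝ a * ι ℝ b) * ι ℝ m = ι ℝ m * (ι ℝ a * ι ℝ b)
      rw [mul_assoc, hswap b m, mul_neg, ← mul_assoc, hswap a m, neg_mul, neg_neg, mul_assoc]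
    | mul u v hu hv => exact hu.mul_right hv
    | add u v hu hv => exact hu.add_right hv
  · intro a b ha hb
    exact ha.add_left hb

lemma exteriorPower_eq_bot [FiniteDimensional ℝ W] {k : ℕ} (hk : Module.finrank ℝ W < k) :
    ⋀[ℝ]^k W = ⊥ := by
  rw [← ιMulti_span_fixedDegree, Submodule.span_eq_bot]
  rintro _ ⟨v, rfl⟩
  apply AlternatingMap.map_linearDependent
  intro h
  have := h.fintype_card_le_finrank
  rw [Fintype.card_fin] at this
  omega

lemma pow_eq_zero_of_mem_two [FiniteDimensional ℝ W] {B : ExteriorAlgebra ℝ W}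
    (hB : B ∈ ⋀[ℝ]^2 W) {m : ℕ} (hm : Module.finrank ℝ W < m) : B ^ m = 0 := by
  have h1 : B ^ m ∈ ⋀[ℝ]^(m • 2) W := SetLike.pow_mem_graded m hB
  rw [show m • 2 = 2 * m from by simp [smul_eq_mul, Nat.mul_comm]] at h1
  rw [exteriorPower_eq_bot (by omega), Submodule.mem_bot] at h1
  exact h1

lemma aeval_eq_sum_range_finrank [FiniteDimensional ℝ W] {B : ExteriorAlgebra ℝ W}
    (hB : B ∈ ⋀[ℝ]^2 W) (p : Polynomial ℝ) :
    Polynomial.aeval B p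
      = ∑ i ∈ Finset.range (Module.finrank ℝ W + 1), p.coeff i • B ^ i := by
  set n := Module.finrank ℝ W
  have hd : p.natDegree < max (p.natDegree + 1) (n + 1) :=
    lt_of_lt_of_le (Nat.lt_succ_self _) (le_max_left _ _)
  rw [Polynomial.aeval_eq_sum_range' hd]
  refine (Finset.sum_subset (Finset.range_subset_range.2 (le_max_right _ _)) ?_).symm
  intro i _ hi
  rw [Finset.mem_range, not_lt] at hi
  rw [pow_eq_zero_of_mem_two hB (by omega), smul_zero]

open PowerSeries in
lemma expWedge_neg_mul_expWedge [FiniteDimensional ℝ W] {B : ExteriorAlgebra ℝ W}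
    (hB : B ∈ ⋀[ℝ]^2 W) : expWedge (-B) * expWedge B = 1 := by
  classical
  set n := Module.finrank ℝ W
  set P : Polynomial ℝ := trunc (n + 1) (exp ℝ) with hP
  set Q : Polynomial ℝ := trunc (n + 1) (evalNegHom (exp ℝ)) with hQ
  have hPcoeff : ∀ i ≤ n, P.coeff i = ((i.factorial : ℝ))⁻¹ := by
    intro i hi
    rw [hP, coeff_trunc, if_pos (by omega), coeff_exp]
    push_cast
    rw [one_div]
  have hQcoeff : ∀ i ≤ n, Q.coeff i = ((-1 : ℝ)) ^ i * ((i.factorial : ℝ))⁻¹ := by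
    intro i hi
    rw [hQ, coeff_trunc, if_pos (by omega)]
    show (PowerSeries.coeff i) (rescale (-1 : ℝ) (exp ℝ)) = _
    rw [coeff_rescale, coeff_exp]
    push_cast
    rw [one_div]
  have hPe : Polynomial.aeval B P = expWedge B := by
    rw [aeval_eq_sum_range_finrank hB, expWedge]
    refine Finset.sum_congr rfl fun i hi => ?_
    rw [Finset.mem_range] at hi
    rw [hPcoeff i (by omega)]
  have hQe : Polynomial.aeval B Q = expWedge (-B) := by
    rw [aeval_eq_sum_range_finrank hB, expWedge]
    refine Finset.sum_congr rfl fun i hi => ?_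
    rw [Finset.mem_range] at hi
    rw [hQcoeff i (by omega), ← neg_one_smul ℝ B, smul_pow, mul_comm, mul_smul]
  have hQP : ∀ i ≤ n, (Q * P).coeff i = if i = 0 then (1 : ℝ) else 0 := by
    intro i hi
    have h1 : (Q * P).coeff i
        = PowerSeries.coeff i ((Q : PowerSeries ℝ) * (P : PowerSeries ℝ)) := by
      rw [← Polynomial.coe_mul, Polynomial.coeff_coe]
    have h2 : PowerSeries.coeff i ((Q : PowerSeries ℝ) * (P : PowerSeries ℝ))
        = (trunc (n + 1) ((Q : PowerSeries ℝ) * (P : PowerSeries ℝ))).coeff i := by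
      rw [coeff_trunc, if_pos (by omega)]
    have h3 : trunc (n + 1) ((Q : PowerSeries ℝ) * (P : PowerSeries ℝ))
        = trunc (n + 1) (evalNegHom (exp ℝ) * exp ℝ) := by
      rw [hP, hQ, trunc_trunc_mul_trunc]
    have h4 : evalNegHom (exp ℝ) * exp ℝ = 1 := by
      rw [mul_comm]; exact exp_mul_exp_neg_eq_one
    rw [h1, h2, h3, h4, trunc_one, Polynomial.coeff_one]
  rw [← hQe, ← hPe, ← map_mul, aeval_eq_sum_range_finrank hB]
  have : ∀ i ∈ Finset.range (n + 1),
      (Q * P).coeff i • B ^ i = if i = 0 then (1 : ExteriorAlgebra ℝ W) else 0 := by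
    intro i hi
    rw [Finset.mem_range] at hi
    rw [hQP i (by omega)]
    split_ifs with h
    · subst h; simp
    · simp
  rw [Finset.sum_congr rfl this, Finset.sum_ite_eq' (Finset.range (n + 1)) 0 fun _ => 1,
    if_pos (Finset.mem_range.2 (by omega))]

lemma sigmaForm_expWedge_mul [FiniteDimensional ℝ W] {B : ExteriorAlgebra ℝ W}
    (hB : B ∈ ⋀[ℝ]^2 W) (φ : ExteriorAlgebra ℝ W) :
    sigmaForm (expWedge B * φ) = expWedge (-B) * sigmaForm φ := by
  rw [expWedge, Finset.sum_mul, sigmaForm_sum, expWedge, Finset.sum_mul]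
  refine Finset.sum_congr rfl fun k _ => ?_
  have hmem : ((k.factorial : ℝ))⁻¹ • B ^ k ∈ ⋀[ℝ]^(2 * k) W := by
    apply Submodule.smul_mem
    have := SetLike.pow_mem_graded k hB
    have h2 : k • 2 = 2 * k := by simp [smul_eq_mul, Nat.mul_comm]
    rwa [h2] at this
  rw [sigmaForm_mul hmem, smul_comm, ← neg_one_smul ℝ B, smul_pow, smul_smul, mul_comm,
    ← smul_smul]

theorem expWedge_preserves_spinorPairing [FiniteDimensional ℝ W]
    (B : ExteriorAlgebra ℝ W) (hB : B ∈ ⋀[ℝ]^2 W) (φ ψ : ExteriorAlgebra ℝ W) :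
    spinorPairing (Module.finrank ℝ W) (expWedge B * φ) (expWedge B * ψ)
      = spinorPairing (Module.finrank ℝ W) φ ψ := by
  unfold spinorPairing
  congr 1
  rw [sigmaForm_expWedge_mul hB]
  have hcomm : Commute (expWedge B) (sigmaForm φ) := by
    rw [expWedge]
    refine Commute.sum_left _ _ _ fun k _ => ?_
    exact ((commute_of_mem_two hB (sigmaForm φ)).pow_left k).smul_left _
  calc expWedge (-B) * sigmaForm φ * (expWedge B * ψ)
      = expWedge (-B) * (sigmaForm φ * expWedge B) * ψ := by
        rw [mul_assoc, mul_assoc, mul_assoc]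
    _ = expWedge (-B) * (expWedge B * sigmaForm φ) * ψ := by rw [hcomm.symm.eq]
    _ = (expWedge (-B) * expWedge B) * (sigmaForm φ * ψ) := by
        rw [← mul_assoc, ← mul_assoc, mul_assoc _ _ ψ]
    _ = sigmaForm φ * ψ := by rw [expWedge_neg_mul_expWedge hB, one_mul]
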